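/- Let Ω be a compact convex subset of ℝ^d, λ ≥ 0, and let μ⁰, μʲ be finite positive Borel measures on Ω. Let γ* be optimal for OPT_λ(μ⁰,μʲ) and suppose γ* = (id × T)_# γ₀* for a Borel measurable map T: Ω → Ω, where γ₀*, γ₁* are the marginals of γ*. Then OPT_λ(μ⁰,μʲ) = ∫_Ω min(‖T(x) − x‖², 2λ) dγ₀*(x) + λ(|μ⁰ − γ₀*| + |μʲ − γ₁*|). -/

import Mathlib

open MeasureTheory

/-- The set of partial transport plans between `μ0` and `μ1`: positive measures on the
product space whose marginals are dominated by `μ0` and `μ1` respectively. -/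
def IsPartialCoupling {d : ℕ} (μ0 μ1 : Measure (EuclideanSpace ℝ (Fin d)))
    (γ : Measure (EuclideanSpace ℝ (Fin d) × EuclideanSpace ℝ (Fin d))) : Prop :=
  γ.map Prod.fst ≤ μ0 ∧ γ.map Prod.snd ≤ μ1

/-- The partial transport cost
`C_λ(γ) = ∫ ‖x−y‖² dγ + λ(|μ0 − γ₀| + |μ1 − γ₁|)`. -/
noncomputable def partialCost {d : ℕ} (lam : ℝ)
    (μ0 μ1 : Measure (EuclideanSpace ℝ (Fin d)))
    (γ : Measure (EuclideanSpace ℝ (Fin d) × EuclideanSpace ℝ (Fin d))) : ℝ :=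
  (∫ p, ‖p.1 - p.2‖ ^ 2 ∂γ) +
    lam * (((μ0 - γ.map Prod.fst) Set.univ).toReal +
           ((μ1 - γ.map Prod.snd) Set.univ).toReal)

/-- The optimal partial transport value `OPT_λ(μ0,μ1)`: the infimum of the partial
transport cost over all partial transport plans. -/
noncomputable def OPTval {d : ℕ} (lam : ℝ)
    (μ0 μ1 : Measure (EuclideanSpace ℝ (Fin d))) : ℝ :=
  sInf {c | ∃ γ, IsPartialCoupling μ0 μ1 γ ∧ c = partialCost lam μ0 μ1 γ}

/-- If `γ* = (id × T)_# γ₀*` is optimal for `OPT_λ(μ⁰,μʲ)`, then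
`OPT_λ(μ⁰,μʲ) = ∫ min(‖T(x)−x‖², 2λ) dγ₀* + λ(|μ⁰−γ₀*| + |μʲ−γ₁*|)`. -/
theorem opt_value_eq_truncated_cost_of_map
    {d : ℕ} (Ω : Set (EuclideanSpace ℝ (Fin d)))
    (hΩc : IsCompact Ω) (hΩconv : Convex ℝ Ω)
    (lam : ℝ) (hlam : 0 ≤ lam)
    (μ0 μj : Measure (EuclideanSpace ℝ (Fin d)))
    [IsFiniteMeasure μ0] [IsFiniteMeasure μj]
    (hμ0 : μ0 Ωᶜ = 0) (hμj : μj Ωᶜ = 0)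
    (γstar : Measure (EuclideanSpace ℝ (Fin d) × EuclideanSpace ℝ (Fin d)))
    (hmem : IsPartialCoupling μ0 μj γstar)
    (hopt : ∀ γ, IsPartialCoupling μ0 μj γ →
      partialCost lam μ0 μj γstar ≤ partialCost lam μ0 μj γ)
    (T : EuclideanSpace ℝ (Fin d) → EuclideanSpace ℝ (Fin d))
    (hT : Measurable T)
    (hγT : γstar = (γstar.map Prod.fst).map (fun x => (x, T x))) :
    OPTval lam μ0 μj =
      (∫ x, min (‖T x - x‖ ^ 2) (2 * lam) ∂(γstar.map Prod.fst)) +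
        lam * (((μ0 - γstar.map Prod.fst) Set.univ).toReal +
               ((μj - γstar.map Prod.snd) Set.univ).toReal) := by
  classical
  have hΩm : MeasurableSet Ω := hΩc.isClosed.measurableSet
  -- Step 1: OPTval = partialCost of γstar
  have h1 : OPTval lam μ0 μj = partialCost lam μ0 μj γstar := by
    apply le_antisymm
    · exact csInf_le ⟨partialCost lam μ0 μj γstar,
        fun c ⟨γ, hγ, hc⟩ => hc ▸ hopt γ hγ⟩ ⟨γstar, hmem, rfl⟩
    · exact le_csInf ⟨_, γstar, hmem, rfl⟩ (fun c ⟨γ, hγ, hc⟩ => hc ▸ hopt γ hγ)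
  rw [h1]
  -- finiteness of γstar
  have hγuniv : ∀ (γ : Measure (EuclideanSpace ℝ (Fin d) × EuclideanSpace ℝ (Fin d))),
      γ.map Prod.fst Set.univ = γ Set.univ := fun γ => by
    rw [Measure.map_apply measurable_fst MeasurableSet.univ, Set.preimage_univ]
  have hγuniv' : ∀ (γ : Measure (EuclideanSpace ℝ (Fin d) × EuclideanSpace ℝ (Fin d))),
      γ.map Prod.snd Set.univ = γ Set.univ := fun γ => by
    rw [Measure.map_apply measurable_snd MeasurableSet.univ, Set.preimage_univ]
  have hfin : IsFiniteMeasure γstar := by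
    constructor
    calc γstar Set.univ = γstar.map Prod.fst Set.univ := (hγuniv γstar).symm
      _ ≤ μ0 Set.univ := Measure.le_iff.mp hmem.1 Set.univ MeasurableSet.univ
      _ < ⊤ := measure_lt_top μ0 _
  -- γstar lives on Ω ×ˢ Ω
  have hae : ∀ᵐ p ∂γstar, p ∈ Ω ×ˢ Ω := by
    have h0 : γstar (Prod.fst ⁻¹' Ωᶜ) = 0 := by
      rw [← Measure.map_apply measurable_fst hΩm.compl]
      exact le_antisymm (le_trans (Measure.le_iff.mp hmem.1 _ hΩm.compl) hμ0.le) bot_le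
    have h2 : γstar (Prod.snd ⁻¹' Ωᶜ) = 0 := by
      rw [← Measure.map_apply measurable_snd hΩm.compl]
      exact le_antisymm (le_trans (Measure.le_iff.mp hmem.2 _ hΩm.compl) hμj.le) bot_le
    have hsub : (Ω ×ˢ Ω)ᶜ ⊆ (Prod.fst ⁻¹' Ωᶜ) ∪ (Prod.snd ⁻¹' Ωᶜ) := by
      intro p hp
      simp only [Set.mem_compl_iff, Set.mem_prod, not_and_or] at hp
      simpa only [Set.mem_union, Set.mem_preimage, Set.mem_compl_iff] using hp
    exact measure_mono_null hsub (measure_union_null h0 h2)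
  -- the cost integrand is integrable
  obtain ⟨R, hR⟩ := hΩc.isBounded.subset_closedBall 0
  have hmf : Measurable fun p : EuclideanSpace ℝ (Fin d) × EuclideanSpace ℝ (Fin d) =>
      ‖p.1 - p.2‖ ^ 2 := ((measurable_fst.sub measurable_snd).norm).pow_const 2
  have hInt : Integrable (fun p : EuclideanSpace ℝ (Fin d) × EuclideanSpace ℝ (Fin d) =>
      ‖p.1 - p.2‖ ^ 2) γstar := by
    refine ⟨hmf.aestronglyMeasurable, HasFiniteIntegral.of_bounded (C := (2 * R) ^ 2) ?_⟩
    filter_upwards [hae] with p hp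
    have h1 : ‖p.1‖ ≤ R := by
      have := hR hp.1; rwa [Metric.mem_closedBall, dist_zero_right] at this
    have h2 : ‖p.2‖ ≤ R := by
      have := hR hp.2; rwa [Metric.mem_closedBall, dist_zero_right] at this
    have h3 : ‖p.1 - p.2‖ ≤ 2 * R := by
      calc ‖p.1 - p.2‖ ≤ ‖p.1‖ + ‖p.2‖ := norm_sub_le _ _
        _ ≤ 2 * R := by linarith
    have : ‖p.1 - p.2‖ ^ 2 ≤ (2 * R) ^ 2 := pow_le_pow_left₀ (norm_nonneg _) h3 2
    calc ‖‖p.1 - p.2‖ ^ 2‖ = ‖p.1 - p.2‖ ^ 2 := by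
          rw [Real.norm_eq_abs, abs_of_nonneg (by positivity)]
      _ ≤ (2 * R) ^ 2 := this
  -- the good set S
  set S : Set (EuclideanSpace ℝ (Fin d) × EuclideanSpace ℝ (Fin d)) :=
    {p | ‖p.1 - p.2‖ ^ 2 ≤ 2 * lam} with hSdef
  have hS : MeasurableSet S := measurableSet_le hmf measurable_const
  -- the restricted plan is a coupling
  have hcoup' : IsPartialCoupling μ0 μj (γstar.restrict S) :=
    ⟨le_trans (Measure.map_mono (Measure.restrict_le_self) measurable_fst) hmem.1,
     le_trans (Measure.map_mono (Measure.restrict_le_self) measurable_snd) hmem.2⟩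
  -- penalty term formula
  have hpen : ∀ (γ : Measure (EuclideanSpace ℝ (Fin d) × EuclideanSpace ℝ (Fin d))),
      IsPartialCoupling μ0 μj γ →
      ((μ0 - γ.map Prod.fst) Set.univ).toReal + ((μj - γ.map Prod.snd) Set.univ).toReal
        = (μ0 Set.univ).toReal + (μj Set.univ).toReal - 2 * (γ Set.univ).toReal := by
    intro γ hγ
    have hfin0 : IsFiniteMeasure (γ.map Prod.fst) := by
      constructor
      exact lt_of_le_of_lt (Measure.le_iff.mp hγ.1 Set.univ MeasurableSet.univ)
        (measure_lt_top μ0 _)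
    have hfin1 : IsFiniteMeasure (γ.map Prod.snd) := by
      constructor
      exact lt_of_le_of_lt (Measure.le_iff.mp hγ.2 Set.univ MeasurableSet.univ)
        (measure_lt_top μj _)
    rw [Measure.sub_apply MeasurableSet.univ hγ.1, Measure.sub_apply MeasurableSet.univ hγ.2,
      ENNReal.toReal_sub_of_le (Measure.le_iff.mp hγ.1 Set.univ MeasurableSet.univ)
        (measure_ne_top μ0 _),
      ENNReal.toReal_sub_of_le (Measure.le_iff.mp hγ.2 Set.univ MeasurableSet.univ)
        (measure_ne_top μj _), hγuniv, hγuniv']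
    ring
  -- key: γstar Sᶜ = 0
  have hnull : γstar Sᶜ = 0 := by
    have hfinS : (γstar Sᶜ) ≠ ⊤ := measure_ne_top _ _
    have hsplit : γstar Set.univ = γstar S + γstar Sᶜ := by
      rw [← measure_union (disjoint_compl_right) hS.compl, Set.union_compl_self]
    have hle := hopt _ hcoup'
    unfold partialCost at hle
    rw [hpen _ hmem, hpen _ hcoup'] at hle
    have hres : (γstar.restrict S) Set.univ = γstar S := by
      rw [Measure.restrict_apply MeasurableSet.univ, Set.univ_inter]
    rw [hres] at hle
    have hIres : (∫ p, ‖p.1 - p.2‖ ^ 2 ∂(γstar.restrict S))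
        = ∫ p in S, ‖p.1 - p.2‖ ^ 2 ∂γstar := rfl
    rw [hIres] at hle
    have hdecomp : (∫ p, ‖p.1 - p.2‖ ^ 2 ∂γstar)
        = (∫ p in S, ‖p.1 - p.2‖ ^ 2 ∂γstar) + (∫ p in Sᶜ, ‖p.1 - p.2‖ ^ 2 ∂γstar) :=
      (integral_add_compl hS hInt).symm
    rw [hdecomp] at hle
    -- totals in real numbers
    have htotal : (γstar Set.univ).toReal = (γstar S).toReal + (γstar Sᶜ).toReal := by
      rw [hsplit, ENNReal.toReal_add (measure_ne_top _ _) hfinS]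
    rw [htotal] at hle
    -- derive the set integral inequality
    have hkey : (∫ p in Sᶜ, ‖p.1 - p.2‖ ^ 2 ∂γstar) ≤ 2 * lam * (γstar Sᶜ).toReal := by
      nlinarith [hle]
    -- the integrand minus 2λ is nonneg on Sᶜ and its integral is ≤ 0
    have hnn : ∀ p ∈ Sᶜ, (0:ℝ) ≤ ‖p.1 - p.2‖ ^ 2 - 2 * lam := by
      intro p hp
      simp only [Set.mem_compl_iff, hSdef, Set.mem_setOf_eq, not_le] at hp
      linarith
    have hIg : IntegrableOn (fun p : EuclideanSpace ℝ (Fin d) × EuclideanSpace ℝ (Fin d) =>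
        ‖p.1 - p.2‖ ^ 2 - 2 * lam) Sᶜ γstar := by
      exact (hInt.integrableOn).sub (integrableOn_const (measure_ne_top _ _))
    have hzero : (∫ p in Sᶜ, (‖p.1 - p.2‖ ^ 2 - 2 * lam) ∂γstar) = 0 := by
      have hc : (∫ p in Sᶜ, (‖p.1 - p.2‖ ^ 2 - 2 * lam) ∂γstar)
          = (∫ p in Sᶜ, ‖p.1 - p.2‖ ^ 2 ∂γstar) - (∫ p in Sᶜ, (2 * lam) ∂γstar) :=
        integral_sub hInt.integrableOn (integrableOn_const (measure_ne_top _ _))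
      have hcc : (∫ _p in Sᶜ, (2 * lam) ∂γstar) = (γstar Sᶜ).toReal * (2 * lam) := by
        rw [setIntegral_const]; simp [mul_comm, measureReal_def]
      refine le_antisymm ?_ (setIntegral_nonneg hS.compl hnn)
      rw [hc, hcc]; nlinarith [hkey]
    have hae0 := (setIntegral_eq_zero_iff_of_nonneg_ae
      (Filter.eventually_of_mem (self_mem_ae_restrict hS.compl)
        (fun p hp => hnn p hp)) hIg).mp hzero
    -- a.e. zero on Sᶜ but strictly positive on Sᶜ forces γstar Sᶜ = 0
    have hsub : Sᶜ ⊆ {p : EuclideanSpace ℝ (Fin d) × EuclideanSpace ℝ (Fin d) |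
        ¬ (‖p.1 - p.2‖ ^ 2 - 2 * lam = 0)} := by
      intro p hp
      simp only [Set.mem_compl_iff, hSdef, Set.mem_setOf_eq, not_le] at hp
      simp only [Set.mem_setOf_eq]
      intro h; linarith
    have := Filter.eventuallyEq_iff_exists_mem.mp hae0
    have hmz : (γstar.restrict Sᶜ) {p : EuclideanSpace ℝ (Fin d) × EuclideanSpace ℝ (Fin d) |
        ¬ (‖p.1 - p.2‖ ^ 2 - 2 * lam = 0)} = 0 := by
      have := hae0
      rw [Filter.EventuallyEq, ae_iff] at this
      simpa using this
    have : γstar.restrict Sᶜ Sᶜ = 0 :=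
      le_antisymm (le_trans (measure_mono hsub) hmz.le) bot_le
    rwa [Measure.restrict_apply hS.compl, Set.inter_self] at this
  -- transfer nullness to γ₀ via the map structure
  have hφ : Measurable (fun x : EuclideanSpace ℝ (Fin d) => (x, T x)) :=
    measurable_id.prodMk hT
  have hγ0null : (γstar.map Prod.fst) {x | ¬ ‖x - T x‖ ^ 2 ≤ 2 * lam} = 0 := by
    have hmap : γstar Sᶜ = (γstar.map Prod.fst) ((fun x => (x, T x)) ⁻¹' Sᶜ) := by
      conv_lhs => rw [hγT]
      rw [Measure.map_apply hφ hS.compl]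
    have hpre : ((fun x : EuclideanSpace ℝ (Fin d) => (x, T x)) ⁻¹' Sᶜ)
        = {x | ¬ ‖x - T x‖ ^ 2 ≤ 2 * lam} := by
      ext x; simp [hSdef]
    rw [hmap, hpre] at hnull
    exact hnull
  have haeT : ∀ᵐ x ∂(γstar.map Prod.fst), ‖x - T x‖ ^ 2 ≤ 2 * lam := by
    rw [ae_iff]; exact hγ0null
  -- compute the integral
  have hint_eq : (∫ p, ‖p.1 - p.2‖ ^ 2 ∂γstar)
      = ∫ x, min (‖T x - x‖ ^ 2) (2 * lam) ∂(γstar.map Prod.fst) := by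
    have h2 : (∫ p, ‖p.1 - p.2‖ ^ 2 ∂γstar)
        = ∫ x, ‖x - T x‖ ^ 2 ∂(γstar.map Prod.fst) := by
      conv_lhs => rw [hγT]
      rw [integral_map hφ.aemeasurable hmf.aestronglyMeasurable]
    rw [h2]
    refine integral_congr_ae ?_
    filter_upwards [haeT] with x hx
    have hx' : ‖T x - x‖ ^ 2 ≤ 2 * lam := by rw [norm_sub_rev]; exact hx
    rw [min_eq_left hx', norm_sub_rev]
  unfold partialCost
  rw [hint_eq]
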